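/- Let F be a field, A an m×m matrix, B an n×n matrix, and S an m×n matrix over F, and let E be an extension field of F containing the eigenvalues of A and B. If there exist a nonzero row vector u ∈ E^{1×m} with uA = αu for some eigenvalue α of A, and a nonzero column vector v ∈ E^n with Bv = βv for some eigenvalue β of B, such that uSv = 0, then the F-linear span of {A^i S B^j : i, j ≥ 0} is a proper subspace of F^{m×n}. -/

import Mathlib

open Matrix Polynomial

/-- If some left eigenvector u of A and right eigenvector v of B (over an
extension field E) satisfy uSv = 0, then the span of {A^i S B^j} is a proper
subspace of the matrix space. -/
theorem span_ne_top_of_eigen_orthogonal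
    {F E : Type*} [Field F] [Field E] [Algebra F E] {m n : ℕ}
    (A : Matrix (Fin m) (Fin m) F) (B : Matrix (Fin n) (Fin n) F)
    (S : Matrix (Fin m) (Fin n) F)
    (u : Fin m → E) (α : E) (v : Fin n → E) (β : E)
    (hu : u ≠ 0) (huA : Matrix.vecMul u (A.map (algebraMap F E)) = α • u)
    (hv : v ≠ 0) (hBv : Matrix.mulVec (B.map (algebraMap F E)) v = β • v)
    (huSv : dotProduct u (Matrix.mulVec (S.map (algebraMap F E)) v) = 0) :
    Submodule.span F {M : Matrix (Fin m) (Fin n) F | ∃ i j : ℕ, M = A ^ i * S * B ^ j} ≠ ⊤ := by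
  set f := algebraMap F E
  set A' := A.map f
  set B' := B.map f
  have hA : ∀ i : ℕ, Matrix.vecMul u (A' ^ i) = α ^ i • u := by
    intro i
    induction i with
    | zero => simp
    | succ i ih =>
        rw [pow_succ, ← Matrix.vecMul_vecMul, ih, Matrix.smul_vecMul, huA,
          smul_smul, pow_succ]
  have hB : ∀ j : ℕ, Matrix.mulVec (B' ^ j) v = β ^ j • v := by
    intro j
    induction j with
    | zero => simp
    | succ j ih =>
        rw [pow_succ', ← Matrix.mulVec_mulVec, ih, Matrix.mulVec_smul, hBv,
          smul_smul, pow_succ]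
  have hpow : ∀ {k : ℕ} (C : Matrix (Fin k) (Fin k) F) (i : ℕ),
      (C ^ i).map f = (C.map f) ^ i := by
    intro k C i
    induction i with
    | zero => rw [pow_zero, pow_zero, Matrix.map_one _ f.map_zero f.map_one]
    | succ i ih => rw [pow_succ, Matrix.map_mul, ih, pow_succ]
  have key : ∀ M ∈ Submodule.span F
      {M : Matrix (Fin m) (Fin n) F | ∃ i j : ℕ, M = A ^ i * S * B ^ j},
      dotProduct u (Matrix.mulVec (M.map f) v) = 0 := by
    intro M hM
    induction hM using Submodule.span_induction with
    | mem M hM =>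
        obtain ⟨i, j, rfl⟩ := hM
        have hmap : (A ^ i * S * B ^ j).map f = A' ^ i * S.map f * B' ^ j := by
          rw [Matrix.map_mul, Matrix.map_mul, hpow, hpow]
        rw [hmap, Matrix.mul_assoc, ← Matrix.mulVec_mulVec, ← Matrix.mulVec_mulVec,
          hB j, Matrix.mulVec_smul, Matrix.mulVec_smul, dotProduct_smul,
          Matrix.dotProduct_mulVec, hA i, smul_dotProduct]
        rw [huSv]
        simp
    | zero => simp
    | add M N _ _ hM hN =>
        have : (M + N).map f = M.map f + N.map f := Matrix.map_add _ (by simp) _ _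
        rw [this, Matrix.add_mulVec, dotProduct_add, hM, hN, add_zero]
    | smul c M _ hM =>
        have : (c • M).map f = f c • M.map f := by
          ext i j; simp [Algebra.smul_def]
        rw [this, Matrix.smul_mulVec, dotProduct_smul, hM, smul_zero]
  obtain ⟨i0, hi0⟩ := Function.ne_iff.mp hu
  obtain ⟨j0, hj0⟩ := Function.ne_iff.mp hv
  intro htop
  have hmem : Matrix.single i0 j0 (1 : F) ∈ Submodule.span F
      {M : Matrix (Fin m) (Fin n) F | ∃ i j : ℕ, M = A ^ i * S * B ^ j} := by
    rw [htop]; trivial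
  have hz := key _ hmem
  have hval : dotProduct u
      (Matrix.mulVec ((Matrix.single i0 j0 (1 : F)).map f) v) = u i0 * v j0 := by
    simp [dotProduct, Matrix.mulVec, Matrix.single, Matrix.map_apply,
      apply_ite f, mul_ite, ite_and, Finset.mul_sum, Finset.sum_ite_eq, Finset.sum_ite_eq']
  rw [hval] at hz
  exact (mul_ne_zero (by simpa using hi0) (by simpa using hj0)) hz
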